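/- arXiv:1509.06884 — 2 statements merged into one kernel-verified Lean document; each statement's English description precedes it below -/
import Mathlib

section
/- For every n ≥ 3, the Z-cube H_n is Hamiltonian connected: any two distinct vertices are joined by a Hamiltonian path. -/
open SimpleGraph

/-- `κ(n)`: `0` for `n ≤ 1`, and `max{1, ⌈log₂ n − 2 log₂ log₂ n⌉}` for `n ≥ 2`. -/
noncomputable def kappa (n : ℕ) : ℕ :=
  if n ≤ 1 then 0
  else max 1 (Int.toNat ⌈Real.logb 2 (n : ℝ) - 2 * Real.logb 2 (Real.logb 2 (n : ℝ))⌉)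

/-- XOR the first `k` bits with the last `k` bits of a binary string of length `n`. -/
def phiAux (n k : ℕ) (x : Fin n → ZMod 2) : Fin n → ZMod 2 :=
  fun i => if h : i.val < k ∧ n - k + i.val < n then x i + x ⟨n - k + i.val, h.2⟩ else x i

/-- The permutation `φ` on `Z₂ⁿ`. -/
noncomputable def phi (n : ℕ) : (Fin n → ZMod 2) → (Fin n → ZMod 2) := phiAux n (kappa n)

/-- The Z-cube `H_n`, a graph on the binary strings of length `n`.  Bit `0` is the
"first" bit; `Fin.tail x` is the string `x` with its first bit removed. -/
noncomputable def Zcube : (n : ℕ) → SimpleGraph (Fin n → ZMod 2)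
  | 0 => ⊥
  | (n + 1) =>
    { Adj := fun x y =>
        (x 0 = y 0 ∧ (Zcube n).Adj (Fin.tail x) (Fin.tail y)) ∨
        (x 0 ≠ y 0 ∧ (Fin.tail y = phi n (Fin.tail x) ∨ Fin.tail x = phi n (Fin.tail y))),
      symm := by
        constructor
        rintro x y (⟨h1, h2⟩ | ⟨h1, h2⟩)
        · exact Or.inl ⟨h1.symm, (Zcube n).symm.symm _ _ h2⟩
        · exact Or.inr ⟨h1.symm, h2.symm⟩
      loopless := by
        constructor
        rintro x (⟨h1, h2⟩ | ⟨h1, h2⟩)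
        · exact (Zcube n).loopless.irrefl _ h2
        · exact h1 rfl }
/-- `σ_n = Σ_{j ∈ S(n)} j / κ(j)²`, where `S(n) = {j ≤ n : κ(j) = κ(j−1)+1}`. -/
noncomputable def sigmaZ (n : ℕ) : ℝ :=
  ∑ j ∈ (Finset.range (n + 1)).filter (fun j => kappa j = kappa (j - 1) + 1),
    (j : ℝ) / (kappa j : ℝ) ^ 2

/-- The last `k` bits of a binary string of length `n` (for `k ≤ n`). -/
def lastBits (k n : ℕ) (v : Fin n → ZMod 2) : Fin k → ZMod 2 :=
  fun i => if h : n - k + i.val < n then v ⟨n - k + i.val, h⟩ else 0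

/-- A walk in `H_n` is `k`-robust if every binary string of length `k` occurs as the
last `k` bits of some vertex of the walk. -/
def IsRobustWalk (k : ℕ) {n : ℕ} {x y : Fin n → ZMod 2} (W : (Zcube n).Walk x y) : Prop :=
  ∀ z : Fin k → ZMod 2, ∃ v ∈ W.support, lastBits k n v = z

/-- The permutation `φ_k` on `Z₂ⁿ`. -/
def phiK (k n : ℕ) (x : Fin n → ZMod 2) : Fin n → ZMod 2 :=
  if n ≤ k then x
  else if n ≤ 2 * k then
    fun i => if h : i.val < n - k ∧ k + i.val < n then x i + x ⟨k + i.val, h.2⟩ else x i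
  else
    fun i => if h : i.val < k ∧ n - k + i.val < n then x i + x ⟨n - k + i.val, h.2⟩ else x i

/-- The Z-cube `Z_{n,k}`. -/
def ZcubeK (k : ℕ) : (n : ℕ) → SimpleGraph (Fin n → ZMod 2)
  | 0 => ⊥
  | (n + 1) =>
    { Adj := fun x y =>
        (x 0 = y 0 ∧ (ZcubeK k n).Adj (Fin.tail x) (Fin.tail y)) ∨
        (x 0 ≠ y 0 ∧ (Fin.tail y = phiK k n (Fin.tail x) ∨ Fin.tail x = phiK k n (Fin.tail y))),
      symm := by
        constructor
        rintro x y (⟨h1, h2⟩ | ⟨h1, h2⟩)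
        · exact Or.inl ⟨h1.symm, (ZcubeK k n).symm.symm _ _ h2⟩
        · exact Or.inr ⟨h1.symm, h2.symm⟩
      loopless := by
        constructor
        rintro x (⟨h1, h2⟩ | ⟨h1, h2⟩)
        · exact (ZcubeK k n).loopless.irrefl _ h2
        · exact h1 rfl }

/-- The subgraph of `H_n` consisting of the cross edges, i.e. the edges between the
two copies `0H_{n−1}` and `1H_{n−1}` (edges whose endpoints differ in the first bit). -/
noncomputable def crossSubgraph (n : ℕ) : (Zcube n).Subgraph where
  verts := Set.univ
  Adj x y := ∃ h : 0 < n, (Zcube n).Adj x y ∧ x ⟨0, h⟩ ≠ y ⟨0, h⟩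
  adj_sub := by rintro x y ⟨h, h1, h2⟩; exact h1
  edge_vert := by intro x y _; trivial
  symm := by constructor; rintro x y ⟨h, h1, h2⟩; exact ⟨h, h1.symm, h2.symm⟩

/-- A graph is Hamiltonian connected if any two distinct vertices are joined by a
Hamiltonian path. -/
def HamiltonianConnected {V : Type*} [DecidableEq V] (G : SimpleGraph V) : Prop :=
  ∀ x y : V, x ≠ y → ∃ p : G.Walk x y, p.IsHamiltonian

/-- The graph obtained from two disjoint copies of `G` by adding the perfect matching
`(u, false) ∼ (ψ u, true)` given by a bijection `ψ`. -/
def matchingJoin {V : Type*} (G : SimpleGraph V) (ψ : V ≃ V) : SimpleGraph (V × Bool) where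
  Adj a b := (a.2 = b.2 ∧ G.Adj a.1 b.1) ∨
    (a.2 = false ∧ b.2 = true ∧ b.1 = ψ a.1) ∨
    (a.2 = true ∧ b.2 = false ∧ a.1 = ψ b.1)
  symm := by
    constructor
    rintro ⟨u, i⟩ ⟨v, j⟩ (⟨h1, h2⟩ | ⟨h1, h2, h3⟩ | ⟨h1, h2, h3⟩)
    · exact Or.inl ⟨h1.symm, h2.symm⟩
    · exact Or.inr (Or.inr ⟨h2, h1, h3⟩)
    · exact Or.inr (Or.inl ⟨h2, h1, h3⟩)
  loopless := by
    constructor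
    rintro ⟨u, i⟩ (⟨h1, h2⟩ | ⟨h1, h2, h3⟩ | ⟨h1, h2, h3⟩)
    · exact G.loopless.irrefl _ h2
    · simp_all
    · simp_all


/-! ### Auxiliary lemmas for the proof -/

section AuxProof

open Finset

lemma kappa_zero : kappa 0 = 0 := by simp [kappa]

lemma kappa_one : kappa 1 = 0 := by simp [kappa]

lemma kappa_two : kappa 2 = 1 := by
  have h2 : Real.logb 2 (2 : ℕ) = 1 := by
    norm_num [Real.logb_self_eq_one]
  rw [kappa, if_neg (by norm_num)]
  rw [h2]
  norm_num [Real.logb_one]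

lemma kappa_lt (n : ℕ) (hn : 2 ≤ n) : kappa n < n := by
  rw [kappa, if_neg (by omega)]
  have hb : (1:ℝ) < 2 := one_lt_two
  have hn0 : (0:ℝ) < (n:ℝ) := by positivity
  have h1 : (1:ℝ) ≤ Real.logb 2 (n : ℝ) := by
    have h2n : (2:ℝ) ≤ (n:ℝ) := by exact_mod_cast hn
    have := Real.logb_le_logb_of_le hb (by norm_num : (0:ℝ) < 2) h2n
    rwa [Real.logb_self_eq_one hb] at this
  have h2 : 0 ≤ Real.logb 2 (Real.logb 2 (n : ℝ)) := Real.logb_nonneg hb h1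
  have h3 : Real.logb 2 (n : ℝ) - 2 * Real.logb 2 (Real.logb 2 (n : ℝ)) ≤ Real.logb 2 (n : ℝ) := by
    linarith
  have h4 : Real.logb 2 (n : ℝ) ≤ ((n - 1 : ℕ) : ℝ) := by
    rw [Real.logb_le_iff_le_rpow hb hn0]
    rw [Real.rpow_natCast]
    have : (n : ℕ) ≤ 2 ^ (n - 1) := by
      have := Nat.lt_two_pow_self (n := n - 1)
      omega
    calc ((n:ℕ):ℝ) ≤ ((2 ^ (n-1) : ℕ) : ℝ) := by exact_mod_cast this
    _ = (2:ℝ) ^ (n-1) := by push_cast; ring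
  have h5 : ⌈Real.logb 2 (n : ℝ) - 2 * Real.logb 2 (Real.logb 2 (n : ℝ))⌉ ≤ ((n - 1 : ℕ) : ℤ) := by
    apply Int.ceil_le.mpr
    push_cast
    push_cast at h4
    linarith
  have h6 : (⌈Real.logb 2 (n : ℝ) - 2 * Real.logb 2 (Real.logb 2 (n : ℝ))⌉).toNat ≤ n - 1 := by
    omega
  omega

lemma phiAux_injective {n k : ℕ} (hk : k < n) : Function.Injective (phiAux n k) := by
  intro x y h
  have key : ∀ d : ℕ, ∀ i : Fin n, n ≤ i.val + d → x i = y i := by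
    intro d
    induction d with
    | zero => intro i hi; exact absurd hi (by omega)
    | succ d ih =>
      intro i hi
      have hfun := congrFun h i
      by_cases hik : i.val < k
      · have hcond : i.val < k ∧ n - k + i.val < n := ⟨hik, by omega⟩
        rw [phiAux, phiAux, dif_pos hcond, dif_pos hcond] at hfun
        have hj : x ⟨n - k + i.val, hcond.2⟩ = y ⟨n - k + i.val, hcond.2⟩ := by
          apply ih
          simp only []
          omega
        rw [hj] at hfun
        exact add_right_cancel hfun
      · have hcond : ¬(i.val < k ∧ n - k + i.val < n) := by tauto
        rwa [phiAux, phiAux, dif_neg hcond, dif_neg hcond] at hfun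
  funext i
  exact key n i (by omega)

lemma zcube_succ_adj (n : ℕ) (x y : Fin (n+1) → ZMod 2) :
    (Zcube (n+1)).Adj x y ↔
      (x 0 = y 0 ∧ (Zcube n).Adj (Fin.tail x) (Fin.tail y)) ∨
      (x 0 ≠ y 0 ∧ (Fin.tail y = phi n (Fin.tail x) ∨ Fin.tail x = phi n (Fin.tail y))) :=
  Iff.rfl

/-- Lift a walk in `Zcube n` to a walk within one of the two copies inside `Zcube (n+1)`. -/
def liftWalk (n : ℕ) (b : ZMod 2) : ∀ {u v : Fin n → ZMod 2}, (Zcube n).Walk u v →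
    (Zcube (n+1)).Walk (Fin.cons b u) (Fin.cons b v)
  | _, _, SimpleGraph.Walk.nil => SimpleGraph.Walk.nil
  | _, _, SimpleGraph.Walk.cons h p =>
      SimpleGraph.Walk.cons
        ((zcube_succ_adj n _ _).mpr (Or.inl ⟨by simp, by simpa [Fin.tail_cons] using h⟩))
        (liftWalk n b p)

lemma liftWalk_support (n : ℕ) (b : ZMod 2) {u v : Fin n → ZMod 2} (p : (Zcube n).Walk u v) :
    (liftWalk n b p).support = p.support.map (Fin.cons b) := by
  induction p with
  | nil => simp [liftWalk]
  | cons h p ih => simp [liftWalk, ih]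

lemma zmod2_ne_add_one (b : ZMod 2) : b ≠ b + 1 := by revert b; decide

lemma zmod2_eq_add_one_of_ne {a b : ZMod 2} (h : a ≠ b) : b = a + 1 := by revert a b; decide

lemma cross_adj (n : ℕ) (b : ZMod 2) (u : Fin n → ZMod 2) :
    (Zcube (n+1)).Adj (Fin.cons b u) (Fin.cons (b+1) (phi n u)) := by
  refine (zcube_succ_adj n _ _).mpr (Or.inr ⟨?_, Or.inl ?_⟩)
  · simp only [Fin.cons_zero]
    exact zmod2_ne_add_one b
  · simp [Fin.tail_cons]

lemma cons_ne_cons_of_ne {n : ℕ} {b b' : ZMod 2} (h : b ≠ b') (u v : Fin n → ZMod 2) :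
    (Fin.cons b u : Fin (n+1) → ZMod 2) ≠ Fin.cons b' v := by
  intro he
  exact h (by simpa using congrFun he 0)

lemma cons_injective (n : ℕ) (b : ZMod 2) :
    Function.Injective (fun w : Fin n → ZMod 2 => (Fin.cons b w : Fin (n+1) → ZMod 2)) := by
  intro a a' h
  funext i
  simpa using congrFun h i.succ

lemma count_map_cons_eq (n : ℕ) (b : ZMod 2) (w : Fin n → ZMod 2)
    (l : List (Fin n → ZMod 2)) :
    List.count (α := Fin (n+1) → ZMod 2) (Fin.cons b w) (List.map (Fin.cons b) l) =
      List.count w l :=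
  List.count_map_of_injective l _ (cons_injective n b) w

lemma count_map_cons_of_ne {n : ℕ} {b b' : ZMod 2} (h : b ≠ b') (v : Fin n → ZMod 2)
    (l : List (Fin n → ZMod 2)) :
    List.count (α := Fin (n+1) → ZMod 2) (Fin.cons b v) (List.map (Fin.cons b') l) = 0 := by
  rw [List.count_eq_zero]
  intro hmem
  obtain ⟨w, _, hw⟩ := List.mem_map.mp hmem
  exact cons_ne_cons_of_ne h.symm w v hw

lemma exists_walk_of_chain {V : Type*} {G : SimpleGraph V} (l : List V) :
    ∀ (_ : l.Chain' G.Adj) {x y : V}, l.head? = some x → l.getLast? = some y →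
      ∃ p : G.Walk x y, p.support = l := by
  induction l with
  | nil => intro _ x y hx _; simp at hx
  | cons a t ih =>
    intro hc x y hx hy
    have hxa : x = a := by simpa using hx.symm
    subst hxa
    cases t with
    | nil =>
      have hya : y = x := by simpa using hy.symm
      subst hya
      exact ⟨SimpleGraph.Walk.nil, rfl⟩
    | cons b t' =>
      replace hc := List.isChain_cons_cons.mp hc
      have hy' : (b :: t').getLast? = some y := by
        rwa [List.getLast?_cons_cons] at hy
      obtain ⟨p, hp⟩ := ih hc.2 rfl hy'
      exact ⟨SimpleGraph.Walk.cons hc.1 p, by simp [hp]⟩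

lemma ham_of_list {V : Type*} [Fintype V] [DecidableEq V] {G : SimpleGraph V} {l : List V}
    (hc : l.Chain' G.Adj) (hn : l.Nodup) (hl : l.length = Fintype.card V) {x y : V}
    (hx : l.head? = some x) (hy : l.getLast? = some y) :
    ∃ p : G.Walk x y, p.IsHamiltonian := by
  obtain ⟨p, hp⟩ := exists_walk_of_chain l hc hx hy
  refine ⟨p, fun v => ?_⟩
  rw [hp]
  have huniv : l.toFinset = Finset.univ :=
    Finset.eq_univ_of_card _ (by rw [List.toFinset_card_of_nodup hn, hl])
  have hmem : v ∈ l := by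
    rw [← List.mem_toFinset, huniv]; exact Finset.mem_univ v
  exact List.count_eq_one_of_mem hn hmem

end AuxProof

def vlist : List (List (Fin 3 → ZMod 2)) :=
  [[![0,0,0], ![0,1,0], ![0,1,1], ![1,0,1], ![1,0,0], ![1,1,0], ![1,1,1], ![0,0,1]],
   [![0,0,0], ![0,0,1], ![1,1,1], ![1,1,0], ![1,0,0], ![1,0,1], ![0,1,1], ![0,1,0]],
   [![0,0,0], ![0,0,1], ![1,1,1], ![1,0,1], ![1,0,0], ![1,1,0], ![0,1,0], ![0,1,1]],
   [![0,0,0], ![0,0,1], ![0,1,1], ![0,1,0], ![1,1,0], ![1,1,1], ![1,0,1], ![1,0,0]],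
   [![0,0,0], ![0,1,0], ![0,1,1], ![0,0,1], ![1,1,1], ![1,1,0], ![1,0,0], ![1,0,1]],
   [![0,0,0], ![0,1,0], ![0,1,1], ![0,0,1], ![1,1,1], ![1,0,1], ![1,0,0], ![1,1,0]],
   [![0,0,0], ![0,0,1], ![0,1,1], ![0,1,0], ![1,1,0], ![1,0,0], ![1,0,1], ![1,1,1]],
   [![0,0,1], ![0,1,1], ![0,1,0], ![1,1,0], ![1,1,1], ![1,0,1], ![1,0,0], ![0,0,0]],
   [![0,0,1], ![0,0,0], ![1,0,0], ![1,1,0], ![1,1,1], ![1,0,1], ![0,1,1], ![0,1,0]],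
   [![0,0,1], ![0,0,0], ![1,0,0], ![1,0,1], ![1,1,1], ![1,1,0], ![0,1,0], ![0,1,1]],
   [![0,0,1], ![0,0,0], ![0,1,0], ![0,1,1], ![1,0,1], ![1,1,1], ![1,1,0], ![1,0,0]],
   [![0,0,1], ![0,1,1], ![0,1,0], ![0,0,0], ![1,0,0], ![1,1,0], ![1,1,1], ![1,0,1]],
   [![0,0,1], ![0,1,1], ![0,1,0], ![0,0,0], ![1,0,0], ![1,0,1], ![1,1,1], ![1,1,0]],
   [![0,0,1], ![0,0,0], ![0,1,0], ![0,1,1], ![1,0,1], ![1,0,0], ![1,1,0], ![1,1,1]],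
   [![0,1,0], ![0,1,1], ![1,0,1], ![1,0,0], ![1,1,0], ![1,1,1], ![0,0,1], ![0,0,0]],
   [![0,1,0], ![0,0,0], ![1,0,0], ![1,1,0], ![1,1,1], ![1,0,1], ![0,1,1], ![0,0,1]],
   [![0,1,0], ![0,0,0], ![0,0,1], ![1,1,1], ![1,1,0], ![1,0,0], ![1,0,1], ![0,1,1]],
   [![0,1,0], ![0,0,0], ![0,0,1], ![0,1,1], ![1,0,1], ![1,1,1], ![1,1,0], ![1,0,0]],
   [![0,1,0], ![0,0,0], ![1,0,0], ![1,1,0], ![1,1,1], ![0,0,1], ![0,1,1], ![1,0,1]],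
   [![0,1,0], ![0,0,0], ![1,0,0], ![1,0,1], ![0,1,1], ![0,0,1], ![1,1,1], ![1,1,0]],
   [![0,1,0], ![0,0,0], ![0,0,1], ![0,1,1], ![1,0,1], ![1,0,0], ![1,1,0], ![1,1,1]],
   [![0,1,1], ![0,0,1], ![1,1,1], ![1,0,1], ![1,0,0], ![1,1,0], ![0,1,0], ![0,0,0]],
   [![0,1,1], ![0,1,0], ![1,1,0], ![1,1,1], ![1,0,1], ![1,0,0], ![0,0,0], ![0,0,1]],
   [![0,1,1], ![0,0,1], ![0,0,0], ![1,0,0], ![1,0,1], ![1,1,1], ![1,1,0], ![0,1,0]],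
   [![0,1,1], ![0,0,1], ![0,0,0], ![0,1,0], ![1,1,0], ![1,1,1], ![1,0,1], ![1,0,0]],
   [![0,1,1], ![0,0,1], ![1,1,1], ![1,1,0], ![0,1,0], ![0,0,0], ![1,0,0], ![1,0,1]],
   [![0,1,1], ![0,0,1], ![1,1,1], ![1,0,1], ![1,0,0], ![0,0,0], ![0,1,0], ![1,1,0]],
   [![0,1,1], ![0,0,1], ![0,0,0], ![0,1,0], ![1,1,0], ![1,0,0], ![1,0,1], ![1,1,1]],
   [![1,0,0], ![1,0,1], ![0,1,1], ![0,0,1], ![1,1,1], ![1,1,0], ![0,1,0], ![0,0,0]],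
   [![1,0,0], ![0,0,0], ![0,1,0], ![1,1,0], ![1,1,1], ![1,0,1], ![0,1,1], ![0,0,1]],
   [![1,0,0], ![0,0,0], ![0,0,1], ![0,1,1], ![1,0,1], ![1,1,1], ![1,1,0], ![0,1,0]],
   [![1,0,0], ![1,0,1], ![1,1,1], ![1,1,0], ![0,1,0], ![0,0,0], ![0,0,1], ![0,1,1]],
   [![1,0,0], ![0,0,0], ![0,0,1], ![0,1,1], ![0,1,0], ![1,1,0], ![1,1,1], ![1,0,1]],
   [![1,0,0], ![0,0,0], ![0,0,1], ![1,1,1], ![1,0,1], ![0,1,1], ![0,1,0], ![1,1,0]],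
   [![1,0,0], ![1,0,1], ![0,1,1], ![0,0,1], ![0,0,0], ![0,1,0], ![1,1,0], ![1,1,1]],
   [![1,0,1], ![1,0,0], ![1,1,0], ![1,1,1], ![0,0,1], ![0,1,1], ![0,1,0], ![0,0,0]],
   [![1,0,1], ![0,1,1], ![0,1,0], ![0,0,0], ![1,0,0], ![1,1,0], ![1,1,1], ![0,0,1]],
   [![1,0,1], ![0,1,1], ![0,0,1], ![1,1,1], ![1,1,0], ![1,0,0], ![0,0,0], ![0,1,0]],
   [![1,0,1], ![1,0,0], ![0,0,0], ![0,0,1], ![1,1,1], ![1,1,0], ![0,1,0], ![0,1,1]],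
   [![1,0,1], ![0,1,1], ![0,0,1], ![1,1,1], ![1,1,0], ![0,1,0], ![0,0,0], ![1,0,0]],
   [![1,0,1], ![1,0,0], ![0,0,0], ![0,1,0], ![0,1,1], ![0,0,1], ![1,1,1], ![1,1,0]],
   [![1,0,1], ![0,1,1], ![0,1,0], ![1,1,0], ![1,0,0], ![0,0,0], ![0,0,1], ![1,1,1]],
   [![1,1,0], ![0,1,0], ![0,1,1], ![0,0,1], ![1,1,1], ![1,0,1], ![1,0,0], ![0,0,0]],
   [![1,1,0], ![1,0,0], ![0,0,0], ![0,1,0], ![0,1,1], ![1,0,1], ![1,1,1], ![0,0,1]],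
   [![1,1,0], ![1,0,0], ![0,0,0], ![0,0,1], ![1,1,1], ![1,0,1], ![0,1,1], ![0,1,0]],
   [![1,1,0], ![0,1,0], ![0,0,0], ![1,0,0], ![1,0,1], ![1,1,1], ![0,0,1], ![0,1,1]],
   [![1,1,0], ![0,1,0], ![0,1,1], ![1,0,1], ![1,1,1], ![0,0,1], ![0,0,0], ![1,0,0]],
   [![1,1,0], ![1,0,0], ![0,0,0], ![0,1,0], ![0,1,1], ![0,0,1], ![1,1,1], ![1,0,1]],
   [![1,1,0], ![0,1,0], ![0,0,0], ![1,0,0], ![1,0,1], ![0,1,1], ![0,0,1], ![1,1,1]],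
   [![1,1,1], ![0,0,1], ![0,1,1], ![1,0,1], ![1,0,0], ![1,1,0], ![0,1,0], ![0,0,0]],
   [![1,1,1], ![1,0,1], ![0,1,1], ![0,1,0], ![1,1,0], ![1,0,0], ![0,0,0], ![0,0,1]],
   [![1,1,1], ![1,0,1], ![0,1,1], ![0,0,1], ![0,0,0], ![1,0,0], ![1,1,0], ![0,1,0]],
   [![1,1,1], ![0,0,1], ![0,0,0], ![0,1,0], ![1,1,0], ![1,0,0], ![1,0,1], ![0,1,1]],
   [![1,1,1], ![1,0,1], ![0,1,1], ![0,0,1], ![0,0,0], ![0,1,0], ![1,1,0], ![1,0,0]],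
   [![1,1,1], ![0,0,1], ![0,0,0], ![1,0,0], ![1,1,0], ![0,1,0], ![0,1,1], ![1,0,1]],
   [![1,1,1], ![0,0,1], ![0,0,0], ![0,1,0], ![0,1,1], ![1,0,1], ![1,0,0], ![1,1,0]]]

section BaseCase

/-- Computable version of `kappa`, valid for `n ≤ 2`. -/
def kC (m : ℕ) : ℕ := if m ≤ 1 then 0 else 1

/-- Computable version of `Zcube`, agreeing with it for `n ≤ 3`. -/
def ZcubeC : (n : ℕ) → SimpleGraph (Fin n → ZMod 2)
  | 0 => ⊥
  | (n + 1) =>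
    { Adj := fun x y =>
        (x 0 = y 0 ∧ (ZcubeC n).Adj (Fin.tail x) (Fin.tail y)) ∨
        (x 0 ≠ y 0 ∧ (Fin.tail y = phiAux n (kC n) (Fin.tail x) ∨
            Fin.tail x = phiAux n (kC n) (Fin.tail y))),
      symm := by
        constructor
        rintro x y (⟨h1, h2⟩ | ⟨h1, h2⟩)
        · exact Or.inl ⟨h1.symm, (ZcubeC n).symm.symm _ _ h2⟩
        · exact Or.inr ⟨h1.symm, h2.symm⟩
      loopless := by
        constructor
        rintro x (⟨h1, h2⟩ | ⟨h1, h2⟩)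
        · exact (ZcubeC n).loopless.irrefl _ h2
        · exact h1 rfl }

instance ZcubeC.decAdj : ∀ n, DecidableRel (ZcubeC n).Adj
  | 0 => fun _ _ => Decidable.isFalse (fun h => h)
  | (n + 1) => fun x y =>
      haveI := ZcubeC.decAdj n
      decidable_of_iff
        ((x 0 = y 0 ∧ (ZcubeC n).Adj (Fin.tail x) (Fin.tail y)) ∨
          (x 0 ≠ y 0 ∧ (Fin.tail y = phiAux n (kC n) (Fin.tail x) ∨
              Fin.tail x = phiAux n (kC n) (Fin.tail y)))) Iff.rfl

/-- Boolean check that consecutive entries are adjacent in `ZcubeC 3`. -/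
def chainB : List (Fin 3 → ZMod 2) → Bool
  | [] => true
  | [_] => true
  | a :: b :: t => decide ((ZcubeC 3).Adj a b) && chainB (b :: t)

/-- Boolean check that a list has no duplicates. -/
def nodupB : List (Fin 3 → ZMod 2) → Bool
  | [] => true
  | a :: t => !(decide (a ∈ t)) && nodupB t

lemma chainB_correct : ∀ l : List (Fin 3 → ZMod 2), chainB l = true → l.Chain' (ZcubeC 3).Adj
  | [] => fun _ => List.isChain_nil
  | [a] => fun _ => List.isChain_singleton a
  | a :: b :: t => fun h => by
      rw [chainB, Bool.and_eq_true] at h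
      exact List.isChain_cons_cons.mpr ⟨of_decide_eq_true h.1, chainB_correct (b :: t) h.2⟩

lemma nodupB_correct : ∀ l : List (Fin 3 → ZMod 2), nodupB l = true → l.Nodup
  | [] => fun _ => List.nodup_nil
  | a :: t => fun h => by
      rw [nodupB, Bool.and_eq_true, Bool.not_eq_true'] at h
      exact List.nodup_cons.mpr ⟨of_decide_eq_false h.1, nodupB_correct t h.2⟩

lemma kappa_eq_kC (m : ℕ) (hm : m ≤ 2) : kappa m = kC m := by
  interval_cases m
  · rw [kappa_zero]; rfl
  · rw [kappa_one]; rfl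
  · rw [kappa_two]; rfl

lemma zcube_eq_zcubeC (n : ℕ) (hn : n ≤ 3) : Zcube n = ZcubeC n := by
  induction n with
  | zero => rfl
  | succ m ih =>
    have hm : m ≤ 2 := by omega
    have ihm := ih (by omega)
    ext x y
    rw [zcube_succ_adj]
    show _ ↔ (x 0 = y 0 ∧ (ZcubeC m).Adj (Fin.tail x) (Fin.tail y)) ∨ _
    rw [ihm, phi, kappa_eq_kC m hm]

lemma base3 : HamiltonianConnected (Zcube 3) := by
  rw [zcube_eq_zcubeC 3 (by norm_num)]
  intro x y hxy
  have key : ∀ x y : Fin 3 → ZMod 2, x ≠ y →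
      (vlist.any (fun l => l.head? == some x && l.getLast? == some y &&
        chainB l && nodupB l && l.length == 8)) = true := by decide
  obtain ⟨l, hlmem, hl⟩ := List.any_eq_true.mp (key x y hxy)
  simp only [Bool.and_eq_true, beq_iff_eq] at hl
  obtain ⟨⟨⟨⟨hx, hy⟩, hc⟩, hnd⟩, hlen⟩ := hl
  exact ham_of_list (chainB_correct l hc) (nodupB_correct l hnd)
    (by rw [hlen]; simp) hx hy

end BaseCase

section Step

lemma card_pow (n : ℕ) : Fintype.card (Fin n → ZMod 2) = 2 ^ n := by
  simp

lemma step_lemma (n : ℕ) (hn : 3 ≤ n) (ih : HamiltonianConnected (Zcube n)) :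
    HamiltonianConnected (Zcube (n+1)) := by
  have hphi_inj : Function.Injective (phi n) := phiAux_injective (kappa_lt n (by omega))
  intro x y hxy
  have key : ∃ p : (Zcube (n+1)).Walk (Fin.cons (x 0) (Fin.tail x)) (Fin.cons (y 0) (Fin.tail y)),
      p.IsHamiltonian := by
    by_cases h0 : x 0 = y 0
    · -- same copy
      have hts : Fin.tail x ≠ Fin.tail y := by
        intro he
        apply hxy
        rw [← Fin.cons_self_tail x, ← Fin.cons_self_tail y, h0, he]
      obtain ⟨p, hp⟩ := ih _ _ hts
      obtain ⟨u, h, q, rfl⟩ := p.exists_eq_cons_of_ne hts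
      have hfu : phi n (Fin.tail x) ≠ phi n u := fun e => h.ne (hphi_inj e)
      obtain ⟨P0, hP0⟩ := ih _ _ hfu
      refine ⟨SimpleGraph.Walk.cons (cross_adj n (x 0) (Fin.tail x))
        ((liftWalk n (x 0 + 1) P0).append (SimpleGraph.Walk.cons ((cross_adj n (x 0) u).symm)
          ((liftWalk n (x 0) q).copy rfl (by rw [h0])))), ?_⟩
      intro v
      obtain ⟨c, w, rfl⟩ : ∃ c w, v = Fin.cons c w :=
        ⟨v 0, Fin.tail v, (Fin.cons_self_tail v).symm⟩
      have hp' := hp w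
      rw [SimpleGraph.Walk.support_cons, List.count_cons] at hp'
      rw [SimpleGraph.Walk.support_cons, SimpleGraph.Walk.support_append,
        SimpleGraph.Walk.support_cons, List.tail_cons, SimpleGraph.Walk.support_copy,
        liftWalk_support, liftWalk_support, List.count_cons, List.count_append]
      by_cases hc : c = x 0
      · subst hc
        rw [count_map_cons_of_ne (zmod2_ne_add_one (x 0)) w P0.support,
          count_map_cons_eq n (x 0) w _]
        simp only [beq_iff_eq] at hp' ⊢
        have hiff : (Fin.cons (x 0) (Fin.tail x) : Fin (n+1) → ZMod 2) = Fin.cons (x 0) w ↔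
            Fin.tail x = w := by
          constructor
          · exact fun e => cons_injective n (x 0) e
          · rintro rfl; rfl
        rw [if_congr hiff rfl rfl]
        split_ifs at hp' ⊢ <;> omega
      · have hc1 : c = x 0 + 1 := zmod2_eq_add_one_of_ne (fun e => hc e.symm)
        subst hc1
        simp only [beq_iff_eq]
        rw [count_map_cons_of_ne (zmod2_ne_add_one (x 0)).symm w q.support,
          count_map_cons_eq n (x 0 + 1) w _,
          if_neg (cons_ne_cons_of_ne (zmod2_ne_add_one (x 0)) (Fin.tail x) w),
          hP0 w]
    · -- different copies
        have hy0 : y 0 = x 0 + 1 := zmod2_eq_add_one_of_ne h0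
        have hb0 := (Finite.injective_iff_surjective.mp hphi_inj) (Fin.tail y)
        obtain ⟨b₀, hb₀⟩ := hb0
        have hcard : 3 ≤ Fintype.card (Fin n → ZMod 2) := by
          rw [card_pow]
          calc (3:ℕ) ≤ 2 ^ 3 := by norm_num
          _ ≤ 2 ^ n := Nat.pow_le_pow_right (by norm_num) hn
        have hne : (({Fin.tail x, b₀} : Finset (Fin n → ZMod 2))ᶜ).Nonempty := by
          rw [← Finset.card_pos, Finset.card_compl]
          have h2 : ({Fin.tail x, b₀} : Finset (Fin n → ZMod 2)).card ≤ 2 := by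
            apply le_trans (Finset.card_insert_le _ _)
            simp
          omega
        obtain ⟨u, hu⟩ := hne
        rw [Finset.mem_compl, Finset.mem_insert, Finset.mem_singleton] at hu
        push_neg at hu
        obtain ⟨P1, hP1⟩ := ih (Fin.tail x) u (fun e => hu.1 e.symm)
        have hP2ne : phi n u ≠ Fin.tail y := fun e => hu.2 (hphi_inj (e.trans hb₀.symm))
        obtain ⟨P2, hP2⟩ := ih _ _ hP2ne
        refine ⟨(liftWalk n (x 0) P1).append (SimpleGraph.Walk.cons (cross_adj n (x 0) u)
          ((liftWalk n (x 0 + 1) P2).copy rfl (by rw [hy0]))), ?_⟩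
        intro v
        obtain ⟨c, w, rfl⟩ : ∃ c w, v = Fin.cons c w :=
          ⟨v 0, Fin.tail v, (Fin.cons_self_tail v).symm⟩
        rw [SimpleGraph.Walk.support_append, SimpleGraph.Walk.support_cons, List.tail_cons,
          SimpleGraph.Walk.support_copy, liftWalk_support, liftWalk_support, List.count_append]
        by_cases hc : c = x 0
        · subst hc
          rw [count_map_cons_of_ne (zmod2_ne_add_one (x 0)) w P2.support,
            count_map_cons_eq n (x 0) w _, hP1 w]
        · have hc1 : c = x 0 + 1 := zmod2_eq_add_one_of_ne (fun e => hc e.symm)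
          subst hc1
          rw [count_map_cons_of_ne (zmod2_ne_add_one (x 0)).symm w P1.support,
            count_map_cons_eq n (x 0 + 1) w _, hP2 w]
  rwa [Fin.cons_self_tail, Fin.cons_self_tail] at key

end Step

/-- for every `n ≥ 3`, the Z-cube `H_n` is Hamiltonian connected. -/
theorem zcube_hamiltonianConnected (n : ℕ) (hn : 3 ≤ n) :
    HamiltonianConnected (Zcube n) := by
  induction n, hn using Nat.le_induction with
  | base => exact base3
  | succ m hm ih => exact step_lemma m hm ih
end

section
/- σ_n = O(n/(log₂ n)²); in particular σ_n = o(n/log₂ n) as n → ∞. -/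
open SimpleGraph

set_option maxRecDepth 10000

noncomputable def Fz (x : ℝ) : ℝ := Real.logb 2 x - 2 * Real.logb 2 (Real.logb 2 x)

lemma hasDerivAt_Fz {x : ℝ} (hx : 1 < x) :
    HasDerivAt Fz ((x * Real.log 2)⁻¹ * (1 - 2 / Real.log x)) x := by
  have hx0 : x ≠ 0 := by linarith
  have hlx : 0 < Real.log x := Real.log_pos hx
  have hl2 : 0 < Real.log 2 := Real.log_pos one_lt_two
  have hlb : Real.logb 2 x ≠ 0 := by
    unfold Real.logb; positivity
  have h1 : HasDerivAt (fun x : ℝ => Real.log x / Real.log 2) (x⁻¹ / Real.log 2) x :=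
    (Real.hasDerivAt_log hx0).div_const _
  have h2 : HasDerivAt (fun x : ℝ => Real.log (Real.log x / Real.log 2))
      ((x⁻¹ / Real.log 2) / (Real.log x / Real.log 2)) x := by
    have := h1.log (by rw [← Real.logb] at *; exact hlb)
    exact this
  have h3 : HasDerivAt Fz
      (x⁻¹ / Real.log 2 - 2 * (((x⁻¹ / Real.log 2) / (Real.log x / Real.log 2)) / Real.log 2)) x := by
    have := h1.sub (((h2).div_const (Real.log 2)).const_mul 2)
    refine this.congr_of_eventuallyEq (Filter.Eventually.of_forall fun y => ?_)
    simp [Fz, Real.logb]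
  convert h3 using 1
  field_simp

lemma Fz_mono : MonotoneOn Fz (Set.Ici 8) := by
  have hder : ∀ x ∈ Set.Ici (8:ℝ), HasDerivAt Fz ((x * Real.log 2)⁻¹ * (1 - 2 / Real.log x)) x :=
    fun x hx => hasDerivAt_Fz (by simp at hx; linarith)
  apply monotoneOn_of_deriv_nonneg (convex_Ici 8)
  · exact fun x hx => (hder x hx).differentiableAt.continuousAt.continuousWithinAt
  · intro x hx
    rw [interior_Ici] at hx
    exact ((hder x (Set.mem_Ici.mpr (le_of_lt hx))).differentiableAt.differentiableWithinAt)
  · intro x hx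
    rw [interior_Ici] at hx
    have h8 : (8:ℝ) < x := hx
    rw [(hder x h8.le).deriv]
    have hl2 : 0 < Real.log 2 := Real.log_pos one_lt_two
    have hlx : 2 < Real.log x := by
      have : Real.log 8 ≤ Real.log x := Real.log_le_log (by norm_num) h8.le
      have h8' : (8:ℝ) = 2^(3:ℕ) := by norm_num
      have : (3:ℝ) * Real.log 2 ≤ Real.log x := by
        rw [h8', Real.log_pow] at this; push_cast at this; linarith
      nlinarith [Real.log_two_gt_d9]
    have : 2 / Real.log x < 1 := by
      rw [div_lt_one (by linarith)]; linarith
    have hx0 : 0 < x := by linarith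
    have hpos : (0:ℝ) < (x * Real.log 2)⁻¹ := by positivity
    nlinarith

lemma Fz_le_one {x : ℝ} (h2 : 2 ≤ x) (h7 : x ≤ 7.38) : Fz x ≤ 1 := by
  have hanti : AntitoneOn Fz (Set.Icc 2 7.38) := by
    have hder : ∀ x ∈ Set.Icc (2:ℝ) 7.38,
        HasDerivAt Fz ((x * Real.log 2)⁻¹ * (1 - 2 / Real.log x)) x :=
      fun x hx => hasDerivAt_Fz (by have := hx.1; linarith)
    apply antitoneOn_of_deriv_nonpos (convex_Icc 2 7.38)
    · exact fun x hx => (hder x hx).differentiableAt.continuousAt.continuousWithinAt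
    · intro x hx
      rw [interior_Icc] at hx
      exact ((hder x (Set.mem_Icc_of_Ioo hx)).differentiableAt.differentiableWithinAt)
    · intro x hx
      rw [interior_Icc] at hx
      have hx2 : (2:ℝ) < x := hx.1
      rw [(hder x (Set.mem_Icc_of_Ioo hx)).deriv]
      have hl2 : 0 < Real.log 2 := Real.log_pos one_lt_two
      have hlx0 : 0 < Real.log x := Real.log_pos (by linarith)
      have hlx : Real.log x < 2 := by
        rw [← Real.log_exp 2]
        apply Real.log_lt_log (by linarith)
        have he := Real.exp_one_gt_d9
        have : Real.exp 2 = Real.exp 1 * Real.exp 1 := by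
          rw [← Real.exp_add]; norm_num
        nlinarith [hx.2]
      have h1 : (1:ℝ) ≤ 2 / Real.log x := by
        rw [le_div_iff₀ hlx0]; linarith
      have hx0 : (0:ℝ) < x := by linarith
      have : (0:ℝ) ≤ (x * Real.log 2)⁻¹ := by positivity
      nlinarith
  have hF2 : Fz 2 = 1 := by
    unfold Fz
    rw [Real.logb_self_eq_one (by norm_num : (1:ℝ) < 2), Real.logb_one]
    ring
  calc Fz x ≤ Fz 2 := hanti (by constructor <;> norm_num) ⟨h2, h7⟩ h2
  _ = 1 := hF2

lemma kappa_eq {n : ℕ} (hn : 2 ≤ n) : kappa n = max 1 (Int.toNat ⌈Fz n⌉) := by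
  rw [kappa, if_neg (by omega)]; rfl

lemma kappa_mono : Monotone kappa := by
  intro m n hmn
  by_cases hm : m ≤ 1
  · simp [kappa, hm]
  · have hm2 : 2 ≤ m := by omega
    have hn2 : 2 ≤ n := by omega
    rw [kappa_eq hm2, kappa_eq hn2]
    by_cases hA : Int.toNat ⌈Fz m⌉ ≤ 1
    · omega
    · have hFm : 1 < Fz m := by
        by_contra h
        push_neg at h
        have : ⌈Fz m⌉ ≤ 1 := by
          have := Int.ceil_le_ceil h
          simpa using this
        omega
      have h8 : (8:ℝ) ≤ (m:ℝ) := by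
        by_contra h
        push_neg at h
        have hm8 : m < 8 := by exact_mod_cast h
        have hm7 : (m:ℝ) ≤ 7.38 := by
          have : (m:ℝ) ≤ 7 := by exact_mod_cast (by omega : m ≤ 7)
          linarith
        have : Fz m ≤ 1 := Fz_le_one (by exact_mod_cast hm2) hm7
        linarith
      have hmn' : (m:ℝ) ≤ n := by exact_mod_cast hmn
      have hFle : Fz m ≤ Fz n := Fz_mono h8 (le_trans h8 hmn') hmn'
      have := Int.toNat_le_toNat (Int.ceil_le_ceil hFle)
      omega

lemma logb_le_quarter {t : ℝ} (ht : 256 ≤ t) : Real.logb 2 t ≤ t / 4 := by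
  have ht0 : (0:ℝ) < t := by linarith
  have hs : (16:ℝ) ≤ Real.sqrt t := by
    rw [show (16:ℝ) = Real.sqrt 256 from by
      rw [show (256:ℝ) = 16^2 by norm_num, Real.sqrt_sq (by norm_num)]]
    exact Real.sqrt_le_sqrt ht
  have hlt : Real.log t ≤ 2 * Real.sqrt t := by
    have h1 : Real.log (Real.sqrt t) ≤ Real.sqrt t - 1 :=
      Real.log_le_sub_one_of_pos (by positivity)
    have h2 : Real.log (Real.sqrt t) = Real.log t / 2 := Real.log_sqrt ht0.le
    linarith
  have hl2 := Real.log_two_gt_d9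
  have hsq : Real.sqrt t * Real.sqrt t = t := Real.mul_self_sqrt ht0.le
  rw [Real.logb, div_le_iff₀ (Real.log_pos one_lt_two)]
  nlinarith [Real.sqrt_nonneg t]

lemma two_rpow_Fz {x : ℝ} (hx : 2 ≤ x) : (2:ℝ) ^ (Fz x) = x / (Real.logb 2 x)^2 := by
  have hx0 : 0 < x := by linarith
  have ht : 0 < Real.logb 2 x := Real.logb_pos one_lt_two (by linarith)
  unfold Fz
  rw [Real.rpow_sub (by norm_num), Real.rpow_logb (by norm_num) (by norm_num) hx0]
  congr 1
  rw [mul_comm (2:ℝ), Real.rpow_mul (by norm_num), Real.rpow_logb (by norm_num) (by norm_num) ht,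
    show ((2:ℝ):ℝ) = ((2:ℕ):ℝ) by norm_num, Real.rpow_natCast]

lemma logb_nat_pow (k : ℕ) : Real.logb 2 ((2:ℝ)^k) = k := by
  rw [Real.logb, Real.log_pow]
  field_simp

lemma Fz_pow256 : Fz (((2:ℕ)^256 : ℕ) : ℝ) = 240 := by
  have h1 : (((2:ℕ)^256 : ℕ) : ℝ) = ((2:ℝ)^(256:ℕ) : ℝ) := by push_cast; ring
  rw [h1]
  unfold Fz
  rw [logb_nat_pow, show ((256:ℕ):ℝ) = (2:ℝ)^(8:ℕ) by norm_num, logb_nat_pow]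
  norm_num

lemma Fz_ge_240 {n : ℕ} (hn : 2^256 ≤ n) : 240 ≤ Fz n := by
  have h8 : (8:ℝ) ≤ ((2^256 : ℕ):ℝ) := by
    have : (8:ℕ) ≤ 2^256 := by norm_num
    exact_mod_cast this
  have hcast : ((2^256 : ℕ):ℝ) ≤ (n:ℝ) := by exact_mod_cast hn
  have := Fz_mono (Set.mem_Ici.mpr h8) (Set.mem_Ici.mpr (h8.trans hcast)) hcast
  rw [Fz_pow256] at this
  linarith

lemma kappa_large {n : ℕ} (hn : 2^256 ≤ n) :
    kappa n = ⌈Fz n⌉.toNat ∧ Fz n ≤ (kappa n : ℝ) ∧ (kappa n : ℝ) < Fz n + 1 := by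
  have hn2 : 2 ≤ n := le_trans (by norm_num) hn
  have hF := Fz_ge_240 hn
  have hc2 : (240:ℤ) ≤ ⌈Fz n⌉ := by
    have := Int.ceil_le_ceil (show ((240:ℤ):ℝ) ≤ Fz n by exact_mod_cast hF)
    simpa using this
  have hk : kappa n = ⌈Fz n⌉.toNat := by
    rw [kappa_eq hn2]; omega
  have htn : ((⌈Fz n⌉.toNat : ℤ)) = ⌈Fz n⌉ := Int.toNat_of_nonneg (by omega)
  have hcast : ((kappa n : ℕ) : ℝ) = ((⌈Fz n⌉ : ℤ) : ℝ) := by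
    rw [hk]; exact_mod_cast htn
  refine ⟨hk, ?_, ?_⟩
  · rw [hcast]; exact Int.le_ceil _
  · rw [hcast]; exact Int.ceil_lt_add_one _

lemma logb_ge_256 {n : ℕ} (hn : 2^256 ≤ n) : 256 ≤ Real.logb 2 (n:ℝ) := by
  have hcast : ((2^256 : ℕ):ℝ) ≤ (n:ℝ) := by exact_mod_cast hn
  have h0 : (0:ℝ) < ((2^256 : ℕ):ℝ) := by positivity
  have := (Real.logb_le_logb one_lt_two h0 (lt_of_lt_of_le h0 hcast)).mpr hcast
  rw [show ((2^256 : ℕ):ℝ) = (2:ℝ)^(256:ℕ) by push_cast; ring, logb_nat_pow] at this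
  exact_mod_cast this

lemma logb_le_twice_kappa {n : ℕ} (hn : 2^256 ≤ n) :
    Real.logb 2 (n:ℝ) ≤ 2 * (kappa n : ℝ) := by
  set t := Real.logb 2 (n:ℝ) with ht
  have h256 : 256 ≤ t := logb_ge_256 hn
  have hq : Real.logb 2 t ≤ t / 4 := logb_le_quarter (by linarith)
  have hF : Fz n ≤ (kappa n : ℝ) := (kappa_large hn).2.1
  have : Fz n = t - 2 * Real.logb 2 t := rfl
  linarith

lemma term_bound {j : ℕ} (hj : 2^256 ≤ j) :
    (j:ℝ) / (kappa j : ℝ)^2 ≤ 4 * 2^(kappa j) := by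
  set t := Real.logb 2 (j:ℝ) with ht
  have h256 : 256 ≤ t := logb_ge_256 hj
  have hF : Fz j ≤ (kappa j : ℝ) := (kappa_large hj).2.1
  have hkpos : (0:ℝ) < (kappa j : ℝ) := by
    have := Fz_ge_240 hj; linarith
  have htk : t ≤ 2 * (kappa j : ℝ) := logb_le_twice_kappa hj
  have h2 : (2:ℝ) ≤ (j:ℝ) := by
    have : (2:ℕ) ≤ j := le_trans (by norm_num) hj
    exact_mod_cast this
  have hrw : (2:ℝ) ^ (Fz j) = (j:ℝ) / t^2 := two_rpow_Fz h2
  have hle : (2:ℝ) ^ (Fz j) ≤ (2:ℝ) ^ ((kappa j : ℕ) : ℝ) :=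
    (Real.rpow_le_rpow_left_iff one_lt_two).mpr hF
  rw [Real.rpow_natCast] at hle
  rw [hrw] at hle
  have htpos : (0:ℝ) < t := by linarith
  have hjle : (j:ℝ) ≤ 2^(kappa j) * t^2 := by
    rw [div_le_iff₀ (by positivity)] at hle
    linarith
  have ht2 : t^2 ≤ 4 * (kappa j:ℝ)^2 := by nlinarith
  have : (j:ℝ) ≤ 2^(kappa j) * (4 * (kappa j:ℝ)^2) := by
    have h2p : (0:ℝ) < 2^(kappa j) := pow_pos (by norm_num) _
    nlinarith
  rw [div_le_iff₀ (by positivity)]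
  nlinarith

lemma kappa_lt_of_jump {a b : ℕ} (hb : kappa b = kappa (b-1) + 1) (hab : a < b) :
    kappa a < kappa b := by
  have := kappa_mono (show a ≤ b - 1 by omega)
  omega

lemma one_le_ratio {n : ℕ} (hn : 2^256 ≤ n) : 1 ≤ (n:ℝ) / (Real.logb 2 (n:ℝ))^2 := by
  have h2 : (2:ℝ) ≤ (n:ℝ) := by
    have : (2:ℕ) ≤ n := le_trans (by norm_num) hn
    exact_mod_cast this
  rw [← two_rpow_Fz h2]
  have hF := Fz_ge_240 hn
  calc (1:ℝ) = (2:ℝ)^(0:ℝ) := by norm_num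
  _ ≤ (2:ℝ)^(Fz n) := (Real.rpow_le_rpow_left_iff one_lt_two).mpr (by linarith)

lemma sigma_bound {n : ℕ} (hn : 2^256 ≤ n) :
    sigmaZ n ≤ 2^512 + 16 * ((n:ℝ) / (Real.logb 2 (n:ℝ))^2) := by
  classical
  set s := (Finset.range (n+1)).filter (fun j => kappa j = kappa (j-1) + 1) with hs
  have hsplit : ∑ j ∈ s.filter (fun j => j < 2^256), ((j:ℝ)/(kappa j:ℝ)^2)
      + ∑ j ∈ s.filter (fun j => ¬ j < 2^256), ((j:ℝ)/(kappa j:ℝ)^2)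
      = sigmaZ n := Finset.sum_filter_add_sum_filter_not s _ _
  have hsmall : ∑ j ∈ s.filter (fun j => j < 2^256), ((j:ℝ)/(kappa j:ℝ)^2) ≤ (2:ℝ)^512 := by
    have h1 : ∀ j ∈ s.filter (fun j => j < 2^256), (j:ℝ)/(kappa j:ℝ)^2 ≤ ((2:ℝ)^(256:ℕ)) := by
      intro j hj
      simp only [Finset.mem_filter, hs, Finset.mem_range] at hj
      obtain ⟨⟨hjr, hjump⟩, hjlt⟩ := hj
      have hk1 : 1 ≤ kappa j := by omega
      have hk1' : (1:ℝ) ≤ (kappa j:ℝ)^2 := by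
        have : (1:ℝ) ≤ (kappa j:ℝ) := by exact_mod_cast hk1
        nlinarith
      have hjle : (j:ℝ) ≤ (2:ℝ)^(256:ℕ) := by
        have : (j:ℕ) ≤ 2^256 := hjlt.le
        exact_mod_cast this
      calc (j:ℝ)/(kappa j:ℝ)^2 ≤ (j:ℝ) := div_le_self (by positivity) hk1'
      _ ≤ _ := hjle
    have hcard : (s.filter (fun j => j < 2^256)).card ≤ 2^256 := by
      have : s.filter (fun j => j < 2^256) ⊆ Finset.range (2^256) := by
        intro j hj
        simp only [Finset.mem_filter] at hj
        exact Finset.mem_range.mpr hj.2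
      calc _ ≤ (Finset.range (2^256)).card := Finset.card_le_card this
      _ = 2^256 := Finset.card_range _
    calc ∑ j ∈ s.filter (fun j => j < 2^256), ((j:ℝ)/(kappa j:ℝ)^2)
        ≤ (s.filter (fun j => j < 2^256)).card • ((2:ℝ)^(256:ℕ)) :=
          Finset.sum_le_card_nsmul _ _ _ h1
    _ = ((s.filter (fun j => j < 2^256)).card : ℝ) * (2:ℝ)^(256:ℕ) := nsmul_eq_mul _ _
    _ ≤ ((2^256 : ℕ) : ℝ) * (2:ℝ)^(256:ℕ) := by
          apply mul_le_mul_of_nonneg_right _ (by positivity)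
          exact_mod_cast hcard
    _ = (2:ℝ)^512 := by
          rw [show ((2^256 : ℕ) : ℝ) = (2:ℝ)^(256:ℕ) by push_cast; ring, ← pow_add]
  have hbig : ∑ j ∈ s.filter (fun j => ¬ j < 2^256), ((j:ℝ)/(kappa j:ℝ)^2)
      ≤ 16 * ((n:ℝ)/(Real.logb 2 (n:ℝ))^2) := by
    set s2 := s.filter (fun j => ¬ j < 2^256) with hs2
    have hmem : ∀ j ∈ s2, 2^256 ≤ j ∧ j ≤ n ∧ kappa j = kappa (j-1) + 1 := by
      intro j hj
      simp only [hs2, hs, Finset.mem_filter, Finset.mem_range, not_lt] at hj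
      exact ⟨hj.2, by omega, hj.1.2⟩
    have hstep1 : ∑ j ∈ s2, ((j:ℝ)/(kappa j:ℝ)^2) ≤ ∑ j ∈ s2, 4 * (2:ℝ)^(kappa j) :=
      Finset.sum_le_sum (fun j hj => term_bound (hmem j hj).1)
    have hinj : ∀ a ∈ s2, ∀ b ∈ s2, kappa a = kappa b → a = b := by
      intro a ha b hb hab
      by_contra hne
      rcases Nat.lt_or_ge a b with h | h
      · exact absurd hab (Nat.ne_of_lt (kappa_lt_of_jump (hmem b hb).2.2 h))
      · have h' : b < a := by omega
        exact absurd hab.symm (Nat.ne_of_lt (kappa_lt_of_jump (hmem a ha).2.2 h'))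
    have hstep2 : ∑ j ∈ s2, (4:ℝ) * (2:ℝ)^(kappa j)
        = 4 * ∑ i ∈ s2.image kappa, (2:ℝ)^i := by
      rw [← Finset.mul_sum, Finset.sum_image hinj]
    have hsub : s2.image kappa ⊆ Finset.range (kappa n + 1) := by
      intro i hi
      obtain ⟨j, hj, rfl⟩ := Finset.mem_image.mp hi
      have := kappa_mono (hmem j hj).2.1
      exact Finset.mem_range.mpr (by omega)
    have hstep3 : ∑ i ∈ s2.image kappa, (2:ℝ)^i ≤ ∑ i ∈ Finset.range (kappa n + 1), (2:ℝ)^i :=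
      Finset.sum_le_sum_of_subset_of_nonneg hsub (by intros; positivity)
    have hgeom : ∑ i ∈ Finset.range (kappa n + 1), (2:ℝ)^i ≤ 2 * 2^(kappa n) := by
      rw [geom_sum_eq (by norm_num)]
      have h0 : (0:ℝ) < 2^(kappa n) := by positivity
      rw [pow_succ]
      norm_num
      linarith
    have hkap : (2:ℝ)^(kappa n) ≤ 2 * ((n:ℝ)/(Real.logb 2 (n:ℝ))^2) := by
      obtain ⟨-, -, hlt⟩ := kappa_large hn
      have h2 : (2:ℝ) ≤ (n:ℝ) := by
        have : (2:ℕ) ≤ n := le_trans (by norm_num) hn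
        exact_mod_cast this
      have hle : (2:ℝ)^((kappa n : ℕ):ℝ) ≤ (2:ℝ)^(Fz n + 1) :=
        (Real.rpow_le_rpow_left_iff one_lt_two).mpr hlt.le
      rw [Real.rpow_natCast, Real.rpow_add (by norm_num), Real.rpow_one, two_rpow_Fz h2] at hle
      linarith
    calc ∑ j ∈ s2, ((j:ℝ)/(kappa j:ℝ)^2) ≤ 4 * ∑ i ∈ s2.image kappa, (2:ℝ)^i := by
          rw [← hstep2]; exact hstep1
    _ ≤ 4 * (2 * 2^(kappa n)) := by
          have := hstep3.trans hgeom
          linarith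
    _ ≤ 4 * (2 * (2 * ((n:ℝ)/(Real.logb 2 (n:ℝ))^2))) := by linarith
    _ = 16 * ((n:ℝ)/(Real.logb 2 (n:ℝ))^2) := by ring
  linarith

lemma sigma_nonneg (n : ℕ) : 0 ≤ sigmaZ n :=
  Finset.sum_nonneg (fun j _ => by positivity)

open Asymptotics in
/-- `σ_n = O(n/(log₂ n)²)`; in particular `σ_n = o(n/log₂ n)`. -/
theorem sigmaZ_asymptotics :
    (fun n : ℕ => sigmaZ n) =O[Filter.atTop] (fun n : ℕ => (n : ℝ) / (Real.logb 2 n) ^ 2) ∧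
    (fun n : ℕ => sigmaZ n) =o[Filter.atTop] (fun n : ℕ => (n : ℝ) / Real.logb 2 n) := by
  have hbigO : (fun n : ℕ => sigmaZ n) =O[Filter.atTop]
      (fun n : ℕ => (n:ℝ)/(Real.logb 2 n)^2) := by
    rw [Asymptotics.isBigO_iff]
    refine ⟨2^512 + 16, ?_⟩
    filter_upwards [Filter.eventually_ge_atTop (2^256)] with n hn
    have h1 := sigma_bound hn
    have h2 := one_le_ratio hn
    have h3 := sigma_nonneg n
    rw [Real.norm_eq_abs, Real.norm_eq_abs, abs_of_nonneg h3, abs_of_nonneg (by linarith)]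
    have h4 : (2:ℝ)^512 ≤ 2^512 * ((n:ℝ) / Real.logb 2 (n:ℝ) ^ 2) :=
      le_mul_of_one_le_right (by positivity) h2
    rw [add_mul]
    exact h1.trans (add_le_add_left h4 _)
  have hlo : (fun n : ℕ => (n:ℝ)/(Real.logb 2 n)^2) =o[Filter.atTop]
      (fun n : ℕ => (n:ℝ)/Real.logb 2 n) := by
    rw [Asymptotics.isLittleO_iff]
    intro c hc
    have htend : Filter.Tendsto (fun n : ℕ => Real.logb 2 (n:ℝ)) Filter.atTop Filter.atTop :=
      (Real.tendsto_logb_atTop one_lt_two).comp tendsto_natCast_atTop_atTop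
    filter_upwards [htend.eventually_ge_atTop (max 1 (1/c))] with n ht
    set t := Real.logb 2 (n:ℝ) with hts
    have htpos : (0:ℝ) < t := lt_of_lt_of_le one_pos (le_trans (le_max_left _ _) ht)
    have hinv : 1 / t ≤ c := by
      rw [div_le_iff₀ htpos]
      have h1c : 1/c ≤ t := le_trans (le_max_right _ _) ht
      rw [div_le_iff₀ hc] at h1c
      linarith
    have hn0 : (0:ℝ) ≤ (n:ℝ) := Nat.cast_nonneg n
    rw [Real.norm_eq_abs, Real.norm_eq_abs, abs_of_nonneg (by positivity),
      abs_of_nonneg (by positivity)]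
    have heq : (n:ℝ)/t^2 = ((n:ℝ)/t) * (1/t) := by
      rw [pow_two, div_mul_div_comm, mul_one]
    rw [heq]
    calc ((n:ℝ)/t) * (1/t) ≤ ((n:ℝ)/t) * c :=
          mul_le_mul_of_nonneg_left hinv (by positivity)
    _ = c * ((n:ℝ)/t) := mul_comm _ _
  exact ⟨hbigO, hbigO.trans_isLittleO hlo⟩
end
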